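/- arXiv:2209.04177 — 2 statements merged into one kernel-verified Lean document; each statement's English description precedes it below -/
import Mathlib

section
/- Let F be a field with |F| ≥ k+1 whose characteristic is 0 or greater than d, and let d ≥ k+1. Let ℓ_1,…,ℓ_k ∈ F[x_1,…,x_n] be polynomials of total degree exactly 1 such that for all i ≠ j, ℓ_i is not a scalar multiple of ℓ_j, and let c_1,…,c_k ∈ F all be nonzero. Then the polynomial f = Σ_{i=1}^k c_i·ℓ_i^d is not the zero polynomial. -/
open MvPolynomial

lemma finsupp_deg_one {σ : Type*} (s : σ →₀ ℕ) (h : s.sum (fun _ e => e) = 1) :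
    ∃ m, s = Finsupp.single m 1 := by
  classical
  have hs0 : s ≠ 0 := by
    intro h0; rw [h0] at h; simp [Finsupp.sum] at h
  obtain ⟨m, hm⟩ := Finsupp.support_nonempty_iff.2 hs0
  refine ⟨m, ?_⟩
  have hsum : ∑ a ∈ s.support, s a = 1 := h
  have hcard : s.support.card ≤ 1 := by
    have := Finset.card_nsmul_le_sum s.support s 1 (fun a ha => Nat.one_le_iff_ne_zero.2 (Finsupp.mem_support_iff.1 ha))
    simpa [hsum] using this
  have hsupp : s.support = {m} := by
    have : s.support.card = 1 := le_antisymm hcard (Finset.card_pos.2 ⟨m, hm⟩)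
    obtain ⟨b, hb⟩ := Finset.card_eq_one.1 this
    rw [hb]; rw [hb] at hm; simp at hm; rw [hm]
  have hsm : s m = 1 := by
    rw [← hsum, hsupp, Finset.sum_singleton]
  ext a
  by_cases ha : a = m
  · subst ha; simp [hsm]
  · have : a ∉ s.support := by rw [hsupp]; simp [ha]
    simp [Finsupp.notMem_support_iff.1 this, Finsupp.single_apply, Ne.symm ha, ha]

lemma deg_le_one_decomp {n : ℕ} {F : Type*} [CommRing F] (p : MvPolynomial (Fin n) F)
    (h : p.totalDegree ≤ 1) :
    p = C (constantCoeff p) + ∑ j, C (coeff (Finsupp.single j 1) p) * X j := by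
  classical
  apply MvPolynomial.ext
  intro s
  have hrhs : ∀ j : Fin n, C (coeff (Finsupp.single j 1) p) * X j
      = monomial (Finsupp.single j 1) (coeff (Finsupp.single j 1) p) := fun j =>
    MvPolynomial.C_mul_X_eq_monomial
  rw [coeff_add, coeff_C, Finset.sum_congr rfl (fun j _ => hrhs j), coeff_sum]
  simp only [coeff_monomial]
  by_cases h0 : s = 0
  · subst h0
    rw [Finset.sum_eq_zero (fun j _ => by
      rw [if_neg (by simp [Finsupp.single_eq_zero])])]
    simp [constantCoeff_eq]
  · rw [if_neg (fun hh => h0 hh.symm)]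
    by_cases h1 : ∃ j, s = Finsupp.single j 1
    · obtain ⟨j₀, rfl⟩ := h1
      rw [Finset.sum_eq_single j₀ (fun j _ hj => by
          rw [if_neg (by
            intro hh
            exact hj ((Finsupp.single_left_inj (one_ne_zero)).1 hh))])
        (fun hj => absurd (Finset.mem_univ j₀) hj)]
      simp
    · have hns : coeff s p = 0 := by
        by_contra hne
        have hmem : s ∈ p.support := MvPolynomial.mem_support_iff.2 hne
        have hle : (s.sum fun _ e => e) ≤ 1 :=
          le_trans (MvPolynomial.le_totalDegree hmem) h
        interval_cases hh : (s.sum fun _ e => e)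
        · have hz : ∀ a ∈ s.support, s a = 0 :=
            Finset.sum_eq_zero_iff.1 (by simpa [Finsupp.sum] using hh)
          exact h0 (Finsupp.ext fun a => by
            by_cases ha : a ∈ s.support
            · exact hz a ha
            · simpa using Finsupp.notMem_support_iff.1 ha)
        · exact h1 (finsupp_deg_one s hh)
      rw [hns, zero_add]
      symm
      apply Finset.sum_eq_zero
      intro j _
      rw [if_neg (fun hh => h1 ⟨j, hh.symm⟩)]

lemma univar_powers_ne_zero {K : Type*} [Field K] {ι : Type*} [DecidableEq ι] (T : Finset ι)
    (d : ℕ) (hT : T.Nonempty) (hcard : T.card + 1 ≤ d)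
    (hbin : ∀ j ≤ d, (d.choose j : K) ≠ 0)
    (β γ : ι → K) (hβ : Set.InjOn β T) (hγ : ∀ i ∈ T, γ i ≠ 0) (g0 : K) :
    (∑ i ∈ T, Polynomial.C (γ i) * (Polynomial.X + Polynomial.C (β i)) ^ d)
      + Polynomial.C g0 ≠ 0 := by
  intro hf
  have hcT : 1 ≤ T.card := Finset.card_pos.2 hT
  -- power sums vanish
  have E : ∀ j < T.card, ∑ i ∈ T, γ i * β i ^ j = 0 := by
    intro j hj
    have hj2 : 2 ≤ d - j := by omega
    have hco := congrArg (fun q => Polynomial.coeff q (d - j)) hf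
    simp only [Polynomial.coeff_add, Polynomial.finset_sum_coeff, Polynomial.coeff_C_mul,
      Polynomial.coeff_X_add_C_pow, Polynomial.coeff_zero, Polynomial.coeff_C,
      if_neg (by omega : ¬ d - j = 0), add_zero] at hco
    have hds : d - (d - j) = j := by omega
    have hchs : d.choose (d - j) = d.choose j := Nat.choose_symm (by omega)
    rw [hds, hchs] at hco
    have hfac : (∑ i ∈ T, γ i * β i ^ j) * (d.choose j : K) = 0 := by
      rw [Finset.sum_mul, ← hco]
      exact Finset.sum_congr rfl (fun i _ => by ring)
    rcases mul_eq_zero.1 hfac with h | h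
    · exact h
    · exact absurd h (hbin j (by omega))
  obtain ⟨i₀, hi₀⟩ := hT
  set P : Polynomial K := ∏ i ∈ T.erase i₀, (Polynomial.X - Polynomial.C (β i)) with hP
  have hPdeg : P.natDegree = (T.erase i₀).card := by
    rw [hP, Polynomial.natDegree_prod _ _ (fun i _ => Polynomial.X_sub_C_ne_zero (β i))]
    simp [Polynomial.natDegree_X_sub_C]
  have hPlt : P.natDegree < T.card := by
    rw [hPdeg, Finset.card_erase_of_mem hi₀]; omega
  have key : ∑ i ∈ T, γ i * P.eval (β i) = 0 := by
    rw [Finset.sum_congr rfl (fun i _ => by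
      rw [Polynomial.eval_eq_sum_range' hPlt (β i), Finset.mul_sum])]
    rw [Finset.sum_comm]
    apply Finset.sum_eq_zero
    intro j hj
    have : ∑ i ∈ T, γ i * (P.coeff j * β i ^ j) = P.coeff j * ∑ i ∈ T, γ i * β i ^ j := by
      rw [Finset.mul_sum]; apply Finset.sum_congr rfl; intro i _; ring
    rw [this, E j (Finset.mem_range.1 hj), mul_zero]
  have key2 : ∑ i ∈ T, γ i * P.eval (β i) = γ i₀ * P.eval (β i₀) := by
    apply Finset.sum_eq_single_of_mem i₀ hi₀
    intro i hi hne
    have : P.eval (β i) = 0 := by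
      rw [hP, Polynomial.eval_prod]
      apply Finset.prod_eq_zero (Finset.mem_erase.2 ⟨hne, hi⟩)
      simp
    rw [this, mul_zero]
  have hPne : P.eval (β i₀) ≠ 0 := by
    rw [hP, Polynomial.eval_prod]
    apply Finset.prod_ne_zero_iff.2
    intro i hi
    simp only [Polynomial.eval_sub, Polynomial.eval_X, Polynomial.eval_C, sub_ne_zero]
    exact fun hh => (Finset.mem_erase.1 hi).1 (hβ (Finset.mem_erase.1 hi).2 hi₀ hh.symm)
  rcases mul_eq_zero.1 (key2.symm.trans key) with h | h
  · exact hγ i₀ hi₀ h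
  · exact hPne h

lemma choose_ne_zero_of_char {F : Type*} [Field F] (d : ℕ)
    (hchar : CharZero F ∨ d < ringChar F) : ∀ j ≤ d, (d.choose j : F) ≠ 0 := by
  rcases hchar with h | h
  · intro j hj
    exact_mod_cast (Nat.choose_pos hj).ne'
  · intro j hj
    haveI : CharP F (ringChar F) := ringChar.charP F
    have hp : (ringChar F).Prime := by
      rcases CharP.char_is_prime_or_zero F (ringChar F) with hp | hp
      · exact hp
      · omega
    rw [Ne, CharP.cast_eq_zero_iff F (ringChar F)]
    intro hdvd
    have h1 : d.choose j ∣ d.factorial :=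
      ⟨j.factorial * (d - j).factorial, by
        rw [← Nat.choose_mul_factorial_mul_factorial hj]; ring⟩
    have := (Nat.Prime.dvd_factorial hp).1 (hdvd.trans h1)
    omega

set_option maxHeartbeats 1000000 in
set_option synthInstance.maxHeartbeats 400000 in
/-- If `|F| ≥ k+1`, `char F = 0` or `char F > d`, `d ≥ k+1`, the `ℓ i` are
polynomials of total degree exactly 1, pairwise not scalar multiples of one another, and all
the coefficients `c i` are nonzero, then `∑ i, c i • (ℓ i)^d` is not the zero polynomial. -/
theorem minimal_sum_pow_ne_zero {F : Type*} [Field F] (n k d : ℕ) (hk : 1 ≤ k)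
    (hF : ((k + 1 : ℕ) : Cardinal) ≤ Cardinal.mk F)
    (hchar : CharZero F ∨ d < ringChar F)
    (hd : k + 1 ≤ d)
    (ℓ : Fin k → MvPolynomial (Fin n) F)
    (hdeg : ∀ i, (ℓ i).totalDegree = 1)
    (hpair : ∀ i j, i ≠ j → ∀ c : F, ℓ i ≠ c • ℓ j)
    (c : Fin k → F) (hc : ∀ i, c i ≠ 0) :
    (∑ i, MvPolynomial.C (c i) * (ℓ i) ^ d) ≠ 0 := by
  classical
  intro hf0
  set i₀ : Fin k := ⟨0, hk⟩ with hi₀def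
  have hne : ℓ i₀ ≠ 0 := fun h => by
    have := hdeg i₀; rw [h, totalDegree_zero] at this; omega
  obtain ⟨s, hsmem, hsdeg⟩ : ∃ s ∈ (ℓ i₀).support, (s.sum fun _ e => e) = 1 := by
    obtain ⟨s, hs1, hs2⟩ := Finset.exists_mem_eq_sup (ℓ i₀).support
      (Finset.nonempty_iff_ne_empty.2 (fun h => hne (MvPolynomial.support_eq_empty.1 h))) (fun s => s.sum fun _ e => e)
    exact ⟨s, hs1, by rw [← hs2]; exact (hdeg i₀).symm ▸ rfl⟩
  obtain ⟨m, rfl⟩ := finsupp_deg_one s hsdeg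
  set a : Fin k → F := fun i => coeff (Finsupp.single m 1) (ℓ i) with ha
  have ha₀ : a i₀ ≠ 0 := MvPolynomial.mem_support_iff.1 hsmem
  set ι : MvPolynomial (Fin n) F →+* FractionRing (MvPolynomial (Fin n) F) :=
    algebraMap _ _ with hι
  have hιinj : Function.Injective ι := IsFractionRing.injective _ _
  set ι' : F →+* FractionRing (MvPolynomial (Fin n) F) := ι.comp MvPolynomial.C with hι'
  have hι'inj : Function.Injective ι' := fun x y hxy =>
    MvPolynomial.C_injective (Fin n) F (hιinj hxy)
  set g : Fin n → Polynomial (FractionRing (MvPolynomial (Fin n) F)) := fun j =>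
    Polynomial.C (ι (MvPolynomial.X j)) + if j = m then Polynomial.X else 0 with hg
  set ψ : MvPolynomial (Fin n) F →+* Polynomial (FractionRing (MvPolynomial (Fin n) F)) :=
    MvPolynomial.eval₂Hom (Polynomial.C.comp ι') g with hψdef
  have hψC : ∀ x : F, ψ (MvPolynomial.C x) = Polynomial.C (ι' x) := fun x => by
    rw [hψdef, MvPolynomial.eval₂Hom_C]; rfl
  have hcc : ∀ x : F, ι (MvPolynomial.C x) = ι' x := fun x => rfl
  -- key computation
  have hψkey : ∀ i, ψ (ℓ i) =
      Polynomial.C (ι (ℓ i)) + Polynomial.C (ι' (a i)) * Polynomial.X := by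
    intro i
    have hdec := deg_le_one_decomp (ℓ i) (le_of_eq (hdeg i))
    set b := constantCoeff (ℓ i) with hb
    set A : Fin n → F := fun j => coeff (Finsupp.single j 1) (ℓ i) with hA
    have hL : ψ (MvPolynomial.C b + ∑ j, MvPolynomial.C (A j) * MvPolynomial.X j)
        = Polynomial.C (ι' b) + ∑ j, (Polynomial.C (ι' (A j)) * Polynomial.C (ι (MvPolynomial.X j))
            + if j = m then Polynomial.C (ι' (A j)) * Polynomial.X else 0) := by
      rw [map_add, map_sum, hψC]
      congr 1
      refine Finset.sum_congr rfl fun j _ => ?_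
      rw [map_mul, hψC]
      have h2 : ψ (MvPolynomial.X j) = g j := by rw [hψdef, MvPolynomial.eval₂Hom_X']
      rw [h2, hg, mul_add, mul_ite, mul_zero]
    have hR2 : Polynomial.C (ι (MvPolynomial.C b + ∑ j, MvPolynomial.C (A j) * MvPolynomial.X j))
        = Polynomial.C (ι' b)
          + ∑ j, Polynomial.C (ι' (A j)) * Polynomial.C (ι (MvPolynomial.X j)) := by
      simp only [map_add, map_sum, map_mul, hcc]
    have step : ψ (MvPolynomial.C b + ∑ j, MvPolynomial.C (A j) * MvPolynomial.X j)
        = Polynomial.C (ι (MvPolynomial.C b + ∑ j, MvPolynomial.C (A j) * MvPolynomial.X j))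
          + Polynomial.C (ι' (A m)) * Polynomial.X := by
      rw [hL, hR2, Finset.sum_add_distrib, Finset.sum_ite_eq' Finset.univ m
        (fun j => Polynomial.C (ι' (A j)) * Polynomial.X), if_pos (Finset.mem_univ m)]
      ring
    calc ψ (ℓ i) = ψ (MvPolynomial.C b + ∑ j, MvPolynomial.C (A j) * MvPolynomial.X j) := by
          rw [← hdec]
      _ = Polynomial.C (ι (ℓ i)) + Polynomial.C (ι' (a i)) * Polynomial.X := by
          rw [step, ← hdec]
  -- apply ψ to the hypothesis
  have h1 : ∑ i, Polynomial.C (ι' (c i)) *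
      (Polynomial.C (ι (ℓ i)) + Polynomial.C (ι' (a i)) * Polynomial.X) ^ d = 0 := by
    have h := congrArg ψ hf0
    rw [map_sum, map_zero] at h
    rw [← h]
    refine Finset.sum_congr rfl (fun i _ => ?_)
    rw [map_mul, map_pow, hψkey i, hψC]
  -- split into T and its complement
  set T : Finset (Fin k) := Finset.univ.filter (fun i => a i ≠ 0) with hT
  set β : Fin k → FractionRing (MvPolynomial (Fin n) F) := fun i => ι (ℓ i) / ι' (a i) with hβ
  set γ : Fin k → FractionRing (MvPolynomial (Fin n) F) :=
    fun i => ι' (c i) * (ι' (a i)) ^ d with hγ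
  set g0 : FractionRing (MvPolynomial (Fin n) F) :=
    ∑ i ∈ Finset.univ.filter (fun i => ¬ a i ≠ 0), ι' (c i) * (ι (ℓ i)) ^ d with hg0
  have h2 : (∑ i ∈ T, Polynomial.C (γ i) * (Polynomial.X + Polynomial.C (β i)) ^ d)
      + Polynomial.C g0 = 0 := by
    rw [← h1, ← Finset.sum_filter_add_sum_filter_not Finset.univ (fun i => a i ≠ 0)]
    congr 1
    · refine Finset.sum_congr rfl (fun i hi => ?_)
      have hai : a i ≠ 0 := (Finset.mem_filter.1 hi).2
      have hαi : ι' (a i) ≠ 0 := fun h => hai (hι'inj (by rw [h, map_zero]))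
      have hsplit : Polynomial.C (ι (ℓ i)) + Polynomial.C (ι' (a i)) * Polynomial.X
          = Polynomial.C (ι' (a i)) * (Polynomial.X + Polynomial.C (β i)) := by
        rw [mul_add, ← Polynomial.C_mul, hβ]
        simp only []
        rw [mul_div_cancel₀ _ hαi]
        ring
      rw [hsplit, mul_pow, ← Polynomial.C_pow, ← mul_assoc, ← Polynomial.C_mul, hγ]
    · rw [hg0, map_sum]
      refine Finset.sum_congr rfl (fun i hi => ?_)
      have hai : a i = 0 := not_not.1 (Finset.mem_filter.1 hi).2
      rw [hai, map_zero, Polynomial.C_0, zero_mul, add_zero, ← Polynomial.C_pow,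
        ← Polynomial.C_mul]
  -- apply the univariate lemma
  refine univar_powers_ne_zero T d ⟨i₀, Finset.mem_filter.2 ⟨Finset.mem_univ _, ha₀⟩⟩
    ?_ ?_ β γ ?_ ?_ g0 h2
  · have h3 : T.card ≤ k := le_trans (Finset.card_filter_le _ _) (by simp)
    omega
  · intro j hj
    have hF' := choose_ne_zero_of_char d hchar j hj
    intro hzero
    refine hF' (hι'inj ?_)
    rw [map_natCast, map_zero]
    exact hzero
  · -- injectivity of β on T
    intro i hi j hj hij
    by_contra hne2
    have hai : a i ≠ 0 := (Finset.mem_filter.1 hi).2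
    have haj : a j ≠ 0 := (Finset.mem_filter.1 hj).2
    have hαi : ι' (a i) ≠ 0 := fun h => hai (hι'inj (by rw [h, map_zero]))
    have hαj : ι' (a j) ≠ 0 := fun h => haj (hι'inj (by rw [h, map_zero]))
    have hcross : ι (ℓ i) * ι' (a j) = ι (ℓ j) * ι' (a i) :=
      (div_eq_div_iff hαi hαj).1 hij
    have hcross2 : ℓ i * MvPolynomial.C (a j) = ℓ j * MvPolynomial.C (a i) := by
      apply hιinj
      rw [map_mul, map_mul, hcc, hcc]
      exact hcross
    apply hpair i j hne2 (a i / a j)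
    rw [MvPolynomial.smul_eq_C_mul]
    have hCaj : MvPolynomial.C (a j) ≠ (0 : MvPolynomial (Fin n) F) := fun h => haj (by
      have := MvPolynomial.C_injective (Fin n) F (h.trans (MvPolynomial.C_0).symm)
      simpa using this)
    apply mul_left_cancel₀ hCaj
    have hCs : (MvPolynomial.C (a j) * MvPolynomial.C (a i / a j) : MvPolynomial (Fin n) F)
        = MvPolynomial.C (a i) := by
      rw [← map_mul]
      congr 1
      field_simp
    rw [← mul_assoc, hCs]
    linear_combination hcross2
  · -- γ nonzero on T
    intro i hi
    have hai : a i ≠ 0 := (Finset.mem_filter.1 hi).2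
    have hαi : ι' (a i) ≠ 0 := fun h => hai (hι'inj (by rw [h, map_zero]))
    have hci : ι' (c i) ≠ 0 := fun h => hc i (hι'inj (by rw [h, map_zero]))
    exact mul_ne_zero hci (pow_ne_zero _ hαi)
end

section
/- Let F be a field with |F| ≥ k+1 and let ℓ_1,…,ℓ_k ∈ F[x_1,…,x_n] be polynomials of total degree exactly 1 such that for all i ≠ j, ℓ_i is not a scalar multiple of ℓ_j. Then there exist points u_1,…,u_k ∈ F^n such that for all i, j ∈ {1,…,k}, ℓ_i(u_j) = 0 if and only if i = j. -/
open MvPolynomial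

lemma finsupp_sum_le {n : ℕ} (d : Fin n →₀ ℕ) {x : Fin n} (hx : x ∈ d.support) :
    d x ≤ d.sum fun _ e => e :=
  Finset.single_le_sum (fun _ _ => Nat.zero_le _) hx

lemma finsupp_sum_eq_one {n : ℕ} (d : Fin n →₀ ℕ) (h : (d.sum fun _ e => e) = 1) :
    ∃ m, d = Finsupp.single m 1 := by
  classical
  have hne : d.support.Nonempty := by
    by_contra hsupp
    rw [Finset.not_nonempty_iff_eq_empty] at hsupp
    rw [Finsupp.sum, hsupp, Finset.sum_empty] at h
    simp at h
  obtain ⟨m, hm⟩ := hne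
  refine ⟨m, ?_⟩
  have hdm : 1 ≤ d m := Nat.one_le_iff_ne_zero.mpr (Finsupp.mem_support_iff.mp hm)
  ext x
  rcases eq_or_ne x m with rfl | hx
  · have hle : d x ≤ 1 := h ▸ finsupp_sum_le d hm
    simp [le_antisymm hle hdm]
  · rw [Finsupp.single_eq_of_ne' (Ne.symm hx)]
    by_contra hdx
    have hxs : x ∈ d.support := Finsupp.mem_support_iff.mpr hdx
    have hsub : {m, x} ⊆ d.support := by
      intro y hy
      simp only [Finset.mem_insert, Finset.mem_singleton] at hy
      rcases hy with rfl | rfl <;> assumption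
    have h2 : d m + d x ≤ 1 := by
      rw [Finsupp.sum] at h
      calc d m + d x = ∑ y ∈ ({m, x} : Finset (Fin n)), d y := by
            rw [Finset.sum_insert (by simpa using (Ne.symm hx)), Finset.sum_singleton]
      _ ≤ ∑ y ∈ d.support, d y := Finset.sum_le_sum_of_subset hsub
      _ = 1 := h
    omega

lemma finsupp_sum_eq_zero {n : ℕ} (d : Fin n →₀ ℕ) (h : (d.sum fun _ e => e) = 0) :
    d = 0 := by
  ext x
  rw [Finsupp.zero_apply]
  by_contra hdx
  have hxs : x ∈ d.support := Finsupp.mem_support_iff.mpr hdx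
  have h2 := finsupp_sum_le d hxs
  rw [h] at h2
  omega

/-- Decomposition of a polynomial of total degree ≤ 1. -/
lemma decomp {F : Type*} [CommRing F] {n : ℕ} (P : MvPolynomial (Fin n) F)
    (h : P.totalDegree ≤ 1) :
    P = C (coeff 0 P) + ∑ m, C (coeff (Finsupp.single m 1) P) * X m := by
  classical
  apply MvPolynomial.ext
  intro d
  have hsingle : ∀ m : Fin n, (Finsupp.single m 1 : Fin n →₀ ℕ) ≠ 0 :=
    fun m hh => one_ne_zero (Finsupp.single_eq_zero.mp hh)
  rw [coeff_add, coeff_sum]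
  simp only [coeff_C_mul, coeff_X', coeff_C]
  rcases eq_or_ne d 0 with rfl | hd0
  · rw [if_pos rfl, Finset.sum_eq_zero, add_zero]
    intro m _
    rw [if_neg (hsingle m), mul_zero]
  · rw [if_neg (fun hh => hd0 hh.symm), zero_add]
    rcases Classical.em (∃ m, d = Finsupp.single m 1) with ⟨m', rfl⟩ | hns
    · rw [Finset.sum_eq_single m']
      · simp
      · intro m _ hmm
        rw [if_neg, mul_zero]
        exact fun hc => hmm ((Finsupp.single_left_inj one_ne_zero).mp hc)
      · simp
    · push_neg at hns
      have hPd : coeff d P = 0 := by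
        by_contra hc
        have hds : d ∈ P.support := MvPolynomial.mem_support_iff.mpr hc
        have hle := (MvPolynomial.le_totalDegree hds).trans h
        rcases Nat.le_one_iff_eq_zero_or_eq_one.mp hle with h0 | h1
        · exact hd0 (finsupp_sum_eq_zero d h0)
        · obtain ⟨m, hm⟩ := finsupp_sum_eq_one d h1
          exact hns m hm
      rw [hPd, Finset.sum_eq_zero]
      intro m _
      rw [if_neg (fun hc => hns m hc.symm), mul_zero]

lemma eval_eq_of_deg_le_one {F : Type*} [CommRing F] {n : ℕ} (P : MvPolynomial (Fin n) F)
    (h : P.totalDegree ≤ 1) (u : Fin n → F) :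
    eval u P = coeff 0 P + ∑ m, coeff (Finsupp.single m 1) P * u m := by
  conv_lhs => rw [decomp P h]
  simp

lemma exists_not_mem_finset {F : Type*} (B : Finset F)
    (h : (B.card : Cardinal) < Cardinal.mk F) : ∃ c, c ∉ B := by
  by_contra h'
  push_neg at h'
  have hsub : (Set.univ : Set F) ⊆ ↑B := fun x _ => h' x
  have hle := Cardinal.mk_le_mk_of_subset hsub
  simp only [Cardinal.mk_univ, Finset.coe_sort_coe, Cardinal.mk_coe_finset] at hle
  exact absurd h (not_lt.mpr hle)

lemma avoid {F : Type*} [Field F] {M : Type*} [AddCommGroup M] [Module F M]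
    {ι : Type*} (s : Finset ι) (f : ι → M →ₗ[F] F) (b : ι → F) :
    (∀ i ∈ s, f i ≠ 0 ∨ b i ≠ 0) → ((s.card : Cardinal) < Cardinal.mk F) →
    ∃ v : M, ∀ i ∈ s, f i v + b i ≠ 0 := by
  classical
  induction s using Finset.induction_on with
  | empty => exact fun _ _ => ⟨0, by simp⟩
  | @insert a s ha IH =>
    intro hs hcard
    have hcard' : (s.card : Cardinal) < Cardinal.mk F := by
      refine lt_of_le_of_lt ?_ hcard
      exact_mod_cast Nat.cast_le.mpr (Finset.card_le_card (Finset.subset_insert a s))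
    obtain ⟨v, hv⟩ := IH (fun i hi => hs i (Finset.mem_insert_of_mem hi)) hcard'
    by_cases hfa : f a = 0
    · refine ⟨v, fun i hi => ?_⟩
      rcases Finset.mem_insert.mp hi with rfl | hi'
      · have hba := (hs i (Finset.mem_insert_self i s)).resolve_left (not_not.mpr hfa)
        rw [hfa]
        simpa using hba
      · exact hv i hi'
    · obtain ⟨w, hw⟩ : ∃ w, f a w ≠ 0 := by
        by_contra hcw
        push_neg at hcw
        exact hfa (LinearMap.ext fun w => hcw w)
      set B : Finset F := (insert a s).image (fun i => -(f i v + b i) / f i w) with hB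
      have hBcard : (B.card : Cardinal) < Cardinal.mk F :=
        lt_of_le_of_lt (by exact_mod_cast Finset.card_image_le) hcard
      obtain ⟨c, hc⟩ := exists_not_mem_finset B hBcard
      refine ⟨v + c • w, fun i hi => ?_⟩
      rw [map_add, map_smul, smul_eq_mul]
      intro hzero
      by_cases hfw : f i w = 0
      · rcases Finset.mem_insert.mp hi with rfl | hi'
        · exact hw hfw
        · apply hv i hi'
          rw [hfw, mul_zero, add_zero] at hzero
          exact hzero
      · apply hc
        rw [hB]
        refine Finset.mem_image.mpr ⟨i, hi, ?_⟩
        rw [div_eq_iff hfw]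
        linear_combination -hzero

noncomputable def dotL {F : Type*} [CommRing F] {n : ℕ} (a : Fin n → F) :
    (Fin n → F) →ₗ[F] F :=
  ∑ m, a m • LinearMap.proj m

lemma dotL_apply {F : Type*} [CommRing F] {n : ℕ} (a v : Fin n → F) :
    dotL a v = ∑ m, a m * v m := by
  simp [dotL]

lemma dot_ker {F : Type*} [Field F] {n : ℕ} (a bb : Fin n → F) {m0 : Fin n} (hb : bb m0 ≠ 0)
    (h : ∀ v : Fin n → F, dotL bb v = 0 → dotL a v = 0) :
    ∃ c : F, a = c • bb := by
  classical
  refine ⟨a m0 / bb m0, funext fun m => ?_⟩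
  set v : Fin n → F :=
    fun m' => (if m' = m then bb m0 else 0) - (if m' = m0 then bb m else 0) with hvdef
  have hbv : dotL bb v = 0 := by
    rw [dotL_apply]
    simp only [hvdef, mul_sub, Finset.sum_sub_distrib, mul_ite, mul_zero,
      Finset.sum_ite_eq', Finset.mem_univ, if_pos]
    ring
  have hav := h v hbv
  rw [dotL_apply] at hav
  simp only [hvdef, mul_sub, Finset.sum_sub_distrib, mul_ite, mul_zero,
    Finset.sum_ite_eq', Finset.mem_univ, if_pos] at hav
  simp only [Pi.smul_apply, smul_eq_mul]
  field_simp
  linear_combination hav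

/-- If `|F| ≥ k+1` and `ℓ 1, …, ℓ k` are degree-1 polynomials, pairwise not
scalar multiples of one another, then there are points `u 1, …, u k ∈ F^n` such that
`ℓ i (u j) = 0` iff `i = j`. -/
theorem exists_points_vanishing_iff {F : Type*} [Field F] (n k : ℕ)
    (hF : ((k + 1 : ℕ) : Cardinal) ≤ Cardinal.mk F)
    (ℓ : Fin k → MvPolynomial (Fin n) F)
    (hdeg : ∀ i, (ℓ i).totalDegree = 1)
    (hpair : ∀ i j, i ≠ j → ∀ c : F, ℓ i ≠ c • ℓ j) :
    ∃ u : Fin k → (Fin n → F),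
      ∀ i j, MvPolynomial.eval (u j) (ℓ i) = 0 ↔ i = j := by
  classical
  have hdeg1 : ∀ i, (ℓ i).totalDegree ≤ 1 := fun i => le_of_eq (hdeg i)
  set a : Fin k → Fin n → F := fun i m => coeff (Finsupp.single m 1) (ℓ i) with ha
  set cc : Fin k → F := fun i => coeff 0 (ℓ i) with hcc
  have heval : ∀ i (u : Fin n → F), eval u (ℓ i) = cc i + dotL (a i) u := by
    intro i u
    rw [eval_eq_of_deg_le_one _ (hdeg1 i), dotL_apply]
  have hsmul : ∀ i j (c : F), cc i = c * cc j → a i = c • a j → ℓ i = c • ℓ j := by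
    intro i j c h1 h2
    conv_lhs => rw [decomp (ℓ i) (hdeg1 i)]
    conv_rhs => rw [decomp (ℓ j) (hdeg1 j)]
    rw [smul_add, Finset.smul_sum]
    congr 1
    · have h1' : coeff 0 (ℓ i) = c * coeff 0 (ℓ j) := h1
      rw [h1', C_mul, smul_eq_C_mul]
    · apply Finset.sum_congr rfl
      intro m _
      have h2' : coeff (Finsupp.single m 1) (ℓ i) = c * coeff (Finsupp.single m 1) (ℓ j) := by
        have := congrFun h2 m
        simpa using this
      rw [h2', C_mul, smul_eq_C_mul, mul_assoc]
  have hA : ∀ i, ∃ m0, a i m0 ≠ 0 := by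
    intro i
    by_contra hcon
    push_neg at hcon
    have hC : ℓ i = C (cc i) := by
      rw [decomp (ℓ i) (hdeg1 i)]
      have : ∀ m : Fin n, coeff (Finsupp.single m 1) (ℓ i) = 0 := hcon
      simp [this, hcc]
    have h0 := hdeg i
    rw [hC, totalDegree_C] at h0
    exact zero_ne_one h0
  have key : ∀ j, ∃ u : Fin n → F,
      eval u (ℓ j) = 0 ∧ ∀ i, i ≠ j → eval u (ℓ i) ≠ 0 := by
    intro j
    obtain ⟨m0, hm0⟩ := hA j
    set p : Fin n → F := Pi.single m0 (-(cc j) / a j m0) with hp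
    have hpj : dotL (a j) p = -(cc j) := by
      rw [dotL_apply]
      simp only [hp, Pi.single_apply, mul_ite, mul_zero,
        Finset.sum_ite_eq', Finset.mem_univ, if_pos]
      field_simp
    have hevpj : eval p (ℓ j) = 0 := by
      rw [heval, hpj]
      ring
    set M := LinearMap.ker (dotL (a j)) with hM
    set f : Fin k → M →ₗ[F] F := fun i => (dotL (a i)).comp M.subtype with hf
    set b : Fin k → F := fun i => eval p (ℓ i) with hb
    have hfb : ∀ i ∈ Finset.univ.erase j, f i ≠ 0 ∨ b i ≠ 0 := by
      intro i hi
      have hij : i ≠ j := Finset.ne_of_mem_erase hi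
      by_contra hcon
      push_neg at hcon
      obtain ⟨hf0, hb0⟩ := hcon
      have hker : ∀ v : Fin n → F, dotL (a j) v = 0 → dotL (a i) v = 0 := by
        intro v hv
        have := LinearMap.congr_fun hf0 ⟨v, LinearMap.mem_ker.mpr hv⟩
        simpa [hf] using this
      obtain ⟨c, hcEq⟩ := dot_ker (a i) (a j) hm0 hker
      have hbi : cc i + dotL (a i) p = 0 := by
        rw [← heval]
        exact hb0
      have hdots : dotL (a i) p = c * dotL (a j) p := by
        rw [hcEq, dotL_apply, dotL_apply, Finset.mul_sum]
        apply Finset.sum_congr rfl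
        intro m _
        simp [mul_assoc]
      have hcci : cc i = c * cc j := by
        rw [hdots, hpj] at hbi
        linear_combination hbi
      exact hpair i j hij c (hsmul i j c hcci hcEq)
    have hcard : ((Finset.univ.erase j).card : Cardinal) < Cardinal.mk F := by
      refine lt_of_lt_of_le ?_ hF
      rw [Nat.cast_lt]
      calc (Finset.univ.erase j).card ≤ (Finset.univ : Finset (Fin k)).card :=
            Finset.card_le_card (Finset.erase_subset j Finset.univ)
        _ = k := Finset.card_univ.trans (Fintype.card_fin k)
        _ < k + 1 := Nat.lt_succ_self k
    obtain ⟨v, hv⟩ := avoid (Finset.univ.erase j) f b hfb hcard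
    refine ⟨p + (v : Fin n → F), ?_, ?_⟩
    · rw [heval, map_add, hpj, LinearMap.mem_ker.mp v.2]
      ring
    · intro i hij
      have hvi := hv i (Finset.mem_erase.mpr ⟨hij, Finset.mem_univ i⟩)
      rw [heval, map_add]
      intro h0
      apply hvi
      have : f i v = dotL (a i) (v : Fin n → F) := by simp [hf]
      rw [this]
      show dotL (a i) (v : Fin n → F) + eval p (ℓ i) = 0
      rw [heval]
      linear_combination h0
  choose u hu1 hu2 using key
  refine ⟨u, fun i j => ⟨fun h0 => ?_, fun h => ?_⟩⟩
  · by_contra hij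
    exact hu2 j i hij h0
  · subst h
    exact hu1 i
end
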